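/- Let U₀ be a utility function with inverse marginal I₀ = (U₀′)^{−1}, and let I₁ be an inverse marginal function satisfying the functional equation I₁(a·y) + b·I₁(y) = (1+b)·I₀(c·y) for all y > 0. Define, for x > 0, U₁(x) = U₀(1) + p·∫_{I₁((q/p)·U₀′(1))}^{x} I₁^{−1}(ξ) dξ + (1−p)·∫_{I₁(((1−q)/(1−p))·U₀′(1))}^{x} I₁^{−1}(ξ) dξ, where I₁^{−1} is the inverse function of I₁. Then U₁ is a utility function and U₁′(x) = I₁^{−1}(x) for all x > 0; in particular, the inverse marginal of U₁ is I₁. -/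

import Mathlib

open Set Filter Topology

noncomputable section

/-- A utility function: `C²` on `(0,∞)`, strictly increasing and strictly concave there,
satisfying the Inada conditions. -/
def IsUtility (U : ℝ → ℝ) : Prop :=
  ContDiffOn ℝ 2 U (Set.Ioi 0) ∧
  (∀ x > 0, 0 < deriv U x) ∧
  (∀ x > 0, deriv (deriv U) x < 0) ∧
  Tendsto (deriv U) (nhdsWithin 0 (Set.Ioi 0)) atTop ∧
  Tendsto (deriv U) atTop (nhds 0)

/-- An inverse marginal function: positive, `C¹` on `(0,∞)`, strictly decreasing derivative,
with `I(∞)=0` and `I(0+)=∞`. -/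
def IsInvMarginal (I : ℝ → ℝ) : Prop :=
  (∀ y > 0, 0 < I y) ∧
  ContDiffOn ℝ 1 I (Set.Ioi 0) ∧
  (∀ y > 0, deriv I y < 0) ∧
  Tendsto I atTop (nhds 0) ∧
  Tendsto I (nhdsWithin 0 (Set.Ioi 0)) atTop

/-- `I` is the inverse of the marginal `U'` on the positive reals: `I = (U')⁻¹`. -/
def InvMarginalOf (I U : ℝ → ℝ) : Prop :=
  (∀ x > 0, I (deriv U x) = x) ∧ (∀ y > 0, 0 < I y ∧ deriv U (I y) = y)

/-- `J` is the inverse function of `I` on the positive reals. -/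
def IsInverseOf (J I : ℝ → ℝ) : Prop :=
  (∀ y > 0, J (I y) = y) ∧ (∀ x > 0, 0 < J x ∧ I (J x) = x)

/-- The single-period inverse investment problem:
`U₀(x) = sup {p·U₁(x+π(u−1)) + (1−p)·U₁(x+π(d−1)) : −x/(u−1) ≤ π ≤ x/(1−d)}` for all `x > 0`. -/
def SPIIP (u d p : ℝ) (U₀ U₁ : ℝ → ℝ) : Prop :=
  ∀ x > 0, U₀ x =
    sSup ((fun pi => p * U₁ (x + pi * (u - 1)) + (1 - p) * U₁ (x + pi * (d - 1))) ''
      Set.Icc (-(x / (u - 1))) (x / (1 - d)))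

/-- Given a utility `U₀` with inverse marginal `I₀`, and an inverse marginal
function `I₁` solving the functional equation, the function
`U₁(x) = U₀(1) + p·∫_{I₁((q/p)U₀'(1))}^x I₁⁻¹ + (1−p)·∫_{I₁(((1−q)/(1−p))U₀'(1))}^x I₁⁻¹`
is a utility function with `U₁' = I₁⁻¹`; in particular its inverse marginal is `I₁`. -/
theorem stmt2
    (u d p q a b c : ℝ)
    (hu : 1 < u) (hd0 : 0 < d) (hd1 : d < 1) (hp0 : 0 < p) (hp1 : p < 1)
    (hq : q = (1 - d) / (u - d)) (ha : a = ((1 - p) * q) / (p * (1 - q)))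
    (hb : b = (1 - q) / q) (hc : c = (1 - p) / (1 - q))
    (U₀ I₀ I₁ J₁ : ℝ → ℝ)
    (hU₀ : IsUtility U₀) (hI₀ : InvMarginalOf I₀ U₀)
    (hI₁ : IsInvMarginal I₁)
    (hfeq : ∀ y > 0, I₁ (a * y) + b * I₁ y = (1 + b) * I₀ (c * y))
    (hJ₁ : IsInverseOf J₁ I₁)
    (U₁ : ℝ → ℝ)
    (hU₁def : ∀ x > 0, U₁ x =
      U₀ 1 + p * (∫ ξ in (I₁ ((q / p) * deriv U₀ 1))..x, J₁ ξ)
        + (1 - p) * (∫ ξ in (I₁ (((1 - q) / (1 - p)) * deriv U₀ 1))..x, J₁ ξ)) :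
    IsUtility U₁ ∧ (∀ x > 0, deriv U₁ x = J₁ x) ∧ InvMarginalOf I₁ U₁ := by
  obtain ⟨hIpos, hIc1, hIder, hItop, hI0⟩ := hI₁
  obtain ⟨hJleft, hJright⟩ := hJ₁
  have hq0 : 0 < q := by
    rw [hq]; exact div_pos (by linarith) (by linarith)
  have hq1 : q < 1 := by
    rw [hq]; rw [div_lt_one (by linarith)]; linarith
  have hU'1 : 0 < deriv U₀ 1 := hU₀.2.1 1 one_pos
  set y₁ : ℝ := (q / p) * deriv U₀ 1 with hy₁def
  set y₂ : ℝ := ((1 - q) / (1 - p)) * deriv U₀ 1 with hy₂def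
  have hy₁ : 0 < y₁ := mul_pos (div_pos hq0 hp0) hU'1
  have hy₂ : 0 < y₂ := mul_pos (div_pos (by linarith) (by linarith)) hU'1
  set a₁ : ℝ := I₁ y₁ with ha₁def
  set a₂ : ℝ := I₁ y₂ with ha₂def
  have ha₁ : 0 < a₁ := hIpos _ hy₁
  have ha₂ : 0 < a₂ := hIpos _ hy₂
  -- I₁ is strictly antitone on (0,∞)
  have hIanti : StrictAntiOn I₁ (Ioi 0) := by
    apply strictAntiOn_of_deriv_neg (convex_Ioi 0) hIc1.continuousOn
    intro x hx
    rw [interior_Ioi] at hx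
    exact hIder x hx
  -- key comparison lemmas for J₁
  have hJ_gt : ∀ x z : ℝ, 0 < x → 0 < z → x < I₁ z → z < J₁ x := by
    intro x z hx hz h
    by_contra hle
    push_neg at hle
    rcases eq_or_lt_of_le hle with heq | hlt
    · rw [← heq, (hJright x hx).2] at h; exact lt_irrefl _ h
    · have := hIanti (Set.mem_Ioi.mpr (hJright x hx).1) (Set.mem_Ioi.mpr hz) hlt
      rw [(hJright x hx).2] at this; linarith
  have hJ_lt : ∀ x z : ℝ, 0 < x → 0 < z → I₁ z < x → J₁ x < z := by
    intro x z hx hz h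
    by_contra hle
    push_neg at hle
    rcases eq_or_lt_of_le hle with heq | hlt
    · rw [heq, (hJright x hx).2] at h; exact lt_irrefl _ h
    · have := hIanti (Set.mem_Ioi.mpr hz) (Set.mem_Ioi.mpr (hJright x hx).1) hlt
      rw [(hJright x hx).2] at this; linarith
  -- continuity of J₁
  have hJca : ∀ x > (0:ℝ), ContinuousAt J₁ x := by
    intro x hx
    have hyx : 0 < J₁ x := (hJright x hx).1
    rw [Metric.continuousAt_iff]
    intro ε hε
    set δ : ℝ := min ε (J₁ x / 2) with hδdef
    have hδ0 : 0 < δ := lt_min hε (by linarith)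
    have hδε : δ ≤ ε := min_le_left _ _
    have hyl : 0 < J₁ x - δ := by
      have : δ ≤ J₁ x / 2 := min_le_right _ _
      linarith
    have h1 : I₁ (J₁ x + δ) < x := by
      have := hIanti (Set.mem_Ioi.mpr hyx)
        (Set.mem_Ioi.mpr (by linarith : (0:ℝ) < J₁ x + δ))
        (by linarith : J₁ x < J₁ x + δ)
      rwa [(hJright x hx).2] at this
    have h2 : x < I₁ (J₁ x - δ) := by
      have := hIanti (Set.mem_Ioi.mpr hyl) (Set.mem_Ioi.mpr hyx)
        (by linarith : J₁ x - δ < J₁ x)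
      rwa [(hJright x hx).2] at this
    refine ⟨min (x - I₁ (J₁ x + δ)) (I₁ (J₁ x - δ) - x), lt_min (by linarith) (by linarith), ?_⟩
    intro z hz
    rw [Real.dist_eq] at hz
    have hz1 : I₁ (J₁ x + δ) < z := by
      have := abs_lt.1 hz
      have := this.1
      have hm : min (x - I₁ (J₁ x + δ)) (I₁ (J₁ x - δ) - x) ≤ x - I₁ (J₁ x + δ) :=
        min_le_left _ _
      linarith
    have hz2 : z < I₁ (J₁ x - δ) := by
      have := abs_lt.1 hz
      have := this.2
      have hm : min (x - I₁ (J₁ x + δ)) (I₁ (J₁ x - δ) - x) ≤ I₁ (J₁ x - δ) - x :=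
        min_le_right _ _
      linarith
    have hz0 : 0 < z := lt_trans (hIpos _ (by linarith)) hz1
    have hb1 : J₁ z < J₁ x + δ := hJ_lt z (J₁ x + δ) hz0 (by linarith) hz1
    have hb2 : J₁ x - δ < J₁ z := hJ_gt z (J₁ x - δ) hz0 hyl hz2
    rw [Real.dist_eq, abs_lt]
    constructor <;> linarith
  have hJcont : ContinuousOn J₁ (Ioi 0) := fun x hx => (hJca x hx).continuousWithinAt
  -- derivative of J₁
  have hJd : ∀ x > (0:ℝ), HasDerivAt J₁ ((deriv I₁ (J₁ x))⁻¹) x := by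
    intro x hx
    have hyx : 0 < J₁ x := (hJright x hx).1
    have hId : HasDerivAt I₁ (deriv I₁ (J₁ x)) (J₁ x) := by
      have : DifferentiableAt ℝ I₁ (J₁ x) :=
        (hIc1.differentiableOn one_ne_zero).differentiableAt (Ioi_mem_nhds hyx)
      exact this.hasDerivAt
    have hfg : ∀ᶠ z in 𝓝 x, I₁ (J₁ z) = z := by
      filter_upwards [Ioi_mem_nhds hx] with z hz
      exact (hJright z hz).2
    exact HasDerivAt.of_local_left_inverse (hJca x hx) hId (ne_of_lt (hIder _ hyx)) hfg
  have hJderiv : ∀ x > (0:ℝ), deriv J₁ x = (deriv I₁ (J₁ x))⁻¹ := fun x hx => (hJd x hx).deriv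
  have hJderiv_neg : ∀ x > (0:ℝ), deriv J₁ x < 0 := by
    intro x hx
    rw [hJderiv x hx]
    exact inv_lt_zero.mpr (hIder _ (hJright x hx).1)
  -- the integral representation and its derivative
  have hInt : ∀ (a₀ x : ℝ), 0 < a₀ → 0 < x → IntervalIntegrable J₁ MeasureTheory.volume a₀ x := by
    intro a₀ x ha₀ hx
    apply ContinuousOn.intervalIntegrable
    apply hJcont.mono
    intro t ht
    exact lt_of_lt_of_le (lt_min ha₀ hx) ht.1
  have hU₁has : ∀ x > (0:ℝ), HasDerivAt U₁ (J₁ x) x := by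
    intro x hx
    have h1 : HasDerivAt (fun t => ∫ ξ in a₁..t, J₁ ξ) (J₁ x) x :=
      intervalIntegral.integral_hasDerivAt_right (hInt a₁ x ha₁ hx)
        (hJcont.stronglyMeasurableAtFilter isOpen_Ioi x hx) (hJca x hx)
    have h2 : HasDerivAt (fun t => ∫ ξ in a₂..t, J₁ ξ) (J₁ x) x :=
      intervalIntegral.integral_hasDerivAt_right (hInt a₂ x ha₂ hx)
        (hJcont.stronglyMeasurableAtFilter isOpen_Ioi x hx) (hJca x hx)
    have hF : HasDerivAt
        (fun t => U₀ 1 + p * (∫ ξ in a₁..t, J₁ ξ) + (1 - p) * (∫ ξ in a₂..t, J₁ ξ))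
        (J₁ x) x := by
      have := ((h1.const_mul p).const_add (U₀ 1)).add (h2.const_mul (1 - p))
      have heq : p * J₁ x + (1 - p) * J₁ x = J₁ x := by ring
      rw [heq] at this
      exact this
    apply hF.congr_of_eventuallyEq
    filter_upwards [Ioi_mem_nhds hx] with z hz
    exact hU₁def z hz
  have hdU₁ : ∀ x > (0:ℝ), deriv U₁ x = J₁ x := fun x hx => (hU₁has x hx).deriv
  have hdU₁ev : ∀ x > (0:ℝ), deriv U₁ =ᶠ[𝓝 x] J₁ := by
    intro x hx
    filter_upwards [Ioi_mem_nhds hx] with z hz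
    exact hdU₁ z hz
  -- C¹ smoothness of J₁
  have hJc1 : ContDiffOn ℝ 1 J₁ (Ioi 0) := by
    rw [show (1 : WithTop ℕ∞) = 0 + 1 from rfl,
      contDiffOn_succ_iff_deriv_of_isOpen isOpen_Ioi]
    refine ⟨fun x hx => (hJd x hx).differentiableAt.differentiableWithinAt, by simp, ?_⟩
    rw [contDiffOn_zero]
    apply ContinuousOn.congr (f := fun x => (deriv I₁ (J₁ x))⁻¹)
    · apply ContinuousOn.inv₀
      · exact (hIc1.continuousOn_deriv_of_isOpen isOpen_Ioi le_rfl).comp hJcont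
          (fun x hx => (hJright x hx).1)
      · intro x hx
        exact ne_of_lt (hIder _ (hJright x hx).1)
    · intro x hx
      exact hJderiv x hx
  -- second derivative of U₁
  have hddU₁ : ∀ x > (0:ℝ), deriv (deriv U₁) x = deriv J₁ x := by
    intro x hx
    exact (hdU₁ev x hx).deriv_eq
  refine ⟨⟨?_, ?_, ?_, ?_, ?_⟩, hdU₁, ?_, ?_⟩
  · -- ContDiffOn ℝ 2 U₁
    rw [show (2 : WithTop ℕ∞) = 1 + 1 from rfl,
      contDiffOn_succ_iff_deriv_of_isOpen isOpen_Ioi]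
    refine ⟨fun x hx => (hU₁has x hx).differentiableAt.differentiableWithinAt, by simp, ?_⟩
    exact hJc1.congr (fun x hx => hdU₁ x hx)
  · intro x hx
    rw [hdU₁ x hx]
    exact (hJright x hx).1
  · intro x hx
    rw [hddU₁ x hx]
    exact hJderiv_neg x hx
  · -- Inada at 0
    have hJtend : Tendsto J₁ (𝓝[>] (0:ℝ)) atTop := by
      rw [tendsto_atTop]
      intro M
      set M' : ℝ := max M 1 with hM'def
      have hM' : 0 < M' := lt_of_lt_of_le one_pos (le_max_right _ _)
      have hIM' : 0 < I₁ M' := hIpos _ hM'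
      filter_upwards [Ioo_mem_nhdsGT_of_mem (Set.left_mem_Ico.2 hIM')] with z hz
      have := hJ_gt z M' hz.1 hM' hz.2
      exact le_trans (le_max_left M 1) (le_of_lt this)
    apply hJtend.congr'
    filter_upwards [self_mem_nhdsWithin] with z hz
    exact (hdU₁ z hz).symm
  · -- limit at ∞
    have hJtend : Tendsto J₁ atTop (𝓝 (0:ℝ)) := by
      rw [tendsto_order]
      constructor
      · intro l hl
        filter_upwards [eventually_gt_atTop (0:ℝ)] with z hz
        exact lt_trans hl (hJright z hz).1
      · intro v hv
        have hIv : 0 < I₁ (v / 2) := hIpos _ (by linarith)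
        filter_upwards [eventually_gt_atTop (I₁ (v / 2)), eventually_gt_atTop (0:ℝ)]
          with z hz1 hz2
        have := hJ_lt z (v / 2) hz2 (by linarith) hz1
        linarith
    apply hJtend.congr'
    filter_upwards [eventually_gt_atTop (0:ℝ)] with z hz
    exact (hdU₁ z hz).symm
  · intro x hx
    rw [hdU₁ x hx]
    exact (hJright x hx).2
  · intro y hy
    refine ⟨hIpos y hy, ?_⟩
    rw [hdU₁ _ (hIpos y hy)]
    exact hJleft y hy
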